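/- arXiv:2503.16172 — 3 statements merged into one kernel-verified Lean document; each statement's English description precedes it below -/
import Mathlib

section
/- Let S_k be a sequence of real-valued non-decreasing functions on I = [a,b], and define 𝔩_k[y] = ∫_I |y'(x)|² dx + ∫_I |y(x)|² dS_k(x) for y ∈ W¹₂(I) with y(a) = y(b) = 0. If for every 0 < d ≤ b−a the differences S_k(y) − S_k(x) → +∞ uniformly over pairs x < y in I with y − x = d, then inf{𝔩_k[y] : ‖y‖_{L²(I)} = 1} → +∞ as k → ∞. -/
open MeasureTheory intervalIntegral Filter
open Set

/-- Cauchy–Schwarz: `(∫ f)² ≤ μ(univ) ∫ f²` for a finite measure. -/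
lemma cs_aux {μ : MeasureTheory.Measure ℝ} [IsFiniteMeasure μ] {f : ℝ → ℝ}
    (h1 : Integrable f μ) (h2 : Integrable (fun x => f x ^ 2) μ) :
    (∫ x, f x ∂μ) ^ 2 ≤ (μ Set.univ).toReal * ∫ x, f x ^ 2 ∂μ := by
  set M := (μ Set.univ).toReal with hM
  set A := ∫ x, f x ∂μ with hA
  have hM0 : 0 ≤ M := ENNReal.toReal_nonneg
  have hI2 : 0 ≤ ∫ x, f x ^ 2 ∂μ := integral_nonneg fun x => sq_nonneg _
  rcases eq_or_lt_of_le hM0 with hM0' | hM0'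
  · have hμ0 : μ Set.univ = 0 := by
      have hne := measure_ne_top μ Set.univ
      rcases ENNReal.toReal_eq_zero_iff (μ Set.univ) |>.1 hM0'.symm with h | h
      · exact h
      · exact absurd h hne
    have : μ = 0 := Measure.measure_univ_eq_zero.mp hμ0
    subst this
    simp [hA]
  · have key : 0 ≤ ∫ x, (M * f x - A) ^ 2 ∂μ := integral_nonneg fun x => sq_nonneg _
    have expand : ∫ x, (M * f x - A) ^ 2 ∂μ
        = M ^ 2 * (∫ x, f x ^ 2 ∂μ) - (2 * M * A) * A + A ^ 2 * M := by
      have e1 : ∀ x, (M * f x - A) ^ 2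
          = M ^ 2 * f x ^ 2 - (2 * M * A) * f x + A ^ 2 := fun x => by ring
      simp_rw [e1]
      have i1 : Integrable (fun x => M ^ 2 * f x ^ 2 - 2 * M * A * f x) μ :=
        (h2.const_mul _).sub (h1.const_mul _)
      rw [integral_add i1 (integrable_const _),
        integral_sub (h2.const_mul _) (h1.const_mul _),
        MeasureTheory.integral_const_mul, MeasureTheory.integral_const_mul, MeasureTheory.integral_const, smul_eq_mul, Measure.real, ← hA, ← hM]
      ring
    nlinarith [key, expand]

/-- Cauchy–Schwarz on an interval. -/
lemma cs_interval {s t : ℝ} (hst : s ≤ t) {f : ℝ → ℝ}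
    (h1 : IntervalIntegrable f volume s t)
    (h2 : IntervalIntegrable (fun x => f x ^ 2) volume s t) :
    (∫ u in s..t, f u) ^ 2 ≤ (t - s) * ∫ u in s..t, f u ^ 2 := by
  haveI : IsFiniteMeasure (volume.restrict (Set.Ioc s t)) := ⟨by
    rw [Measure.restrict_apply_univ, Real.volume_Ioc]; exact ENNReal.ofReal_lt_top⟩
  have h1' := (intervalIntegrable_iff_integrableOn_Ioc_of_le hst).1 h1
  have h2' := (intervalIntegrable_iff_integrableOn_Ioc_of_le hst).1 h2
  have hcs := cs_aux h1' h2'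
  rw [Measure.restrict_apply_univ, Real.volume_Ioc,
    ENNReal.toReal_ofReal (by linarith)] at hcs
  rw [integral_of_le hst, integral_of_le hst]
  exact hcs

/-- Hölder-type bound for the primitive. -/
lemma holder_bound {a b s t : ℝ} {y' : ℝ → ℂ}
    (hsq : IntervalIntegrable (fun x => ‖y' x‖ ^ 2) volume a b)
    (has : a ≤ s) (hst : s ≤ t) (htb : t ≤ b)
    (hII : IntervalIntegrable y' volume a t) :
    ‖(∫ u in a..t, y' u) - ∫ u in a..s, y' u‖ ^ 2
      ≤ (t - s) * ∫ x in a..b, ‖y' x‖ ^ 2 := by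
  have hat : a ≤ t := has.trans hst
  have hIIs : IntervalIntegrable y' volume a s := hII.mono_set (by
    rw [Set.uIcc_of_le has, Set.uIcc_of_le hat]; exact Set.Icc_subset_Icc le_rfl hst)
  have hIIst : IntervalIntegrable y' volume s t := hII.mono_set (by
    rw [Set.uIcc_of_le hst, Set.uIcc_of_le hat]; exact Set.Icc_subset_Icc has le_rfl)
  have hdiff : (∫ u in a..t, y' u) - ∫ u in a..s, y' u = ∫ u in s..t, y' u := by
    rw [← integral_add_adjacent_intervals hIIs hIIst]; ring
  rw [hdiff]
  have hnorm1 : ‖∫ u in s..t, y' u‖ ≤ ∫ u in s..t, ‖y' u‖ :=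
    intervalIntegral.norm_integral_le_integral_norm hst
  have hsq_st : IntervalIntegrable (fun x => ‖y' x‖ ^ 2) volume s t := hsq.mono_set (by
    rw [Set.uIcc_of_le hst, Set.uIcc_of_le (has.trans (hst.trans htb))]
    exact Set.Icc_subset_Icc has htb)
  have hcs := cs_interval hst hIIst.norm hsq_st
  have hD0 : (0:ℝ) ≤ ∫ x in a..b, ‖y' x‖ ^ 2 :=
    intervalIntegral.integral_nonneg (has.trans (hst.trans htb)) fun x _ => by positivity
  have hmono : (∫ u in s..t, ‖y' u‖ ^ 2) ≤ ∫ x in a..b, ‖y' x‖ ^ 2 :=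
    integral_mono_interval has hst htb
      (Filter.Eventually.of_forall fun x => by positivity) hsq
  calc ‖∫ u in s..t, y' u‖ ^ 2 ≤ (∫ u in s..t, ‖y' u‖) ^ 2 :=
        pow_le_pow_left₀ (norm_nonneg _) hnorm1 2
    _ ≤ (t - s) * ∫ u in s..t, ‖y' u‖ ^ 2 := hcs
    _ ≤ (t - s) * ∫ x in a..b, ‖y' x‖ ^ 2 :=
        mul_le_mul_of_nonneg_left hmono (by linarith)

lemma exists_witness (a b : ℝ) (hab : a < b) :
    ∃ y' : ℝ → ℂ,
        IntervalIntegrable (fun x => ‖y' x‖ ^ 2) volume a b ∧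
        (∫ t in a..b, y' t) = 0 ∧
        (∫ x in a..b, ‖∫ t in a..x, y' t‖ ^ 2) = 1 := by
  set m : ℝ := (a + b) / 2 with hm
  set g : ℝ → ℝ := fun x => (x ^ 2 - a ^ 2) / 2 - m * (x - a) with hg
  have hint : ∀ x : ℝ, (∫ t in a..x, (t - m)) = g x := by
    intro x
    rw [intervalIntegral.integral_sub intervalIntegral.intervalIntegrable_id
      intervalIntegrable_const, integral_id, intervalIntegral.integral_const, smul_eq_mul, hg]
    ring
  have hFx : ∀ x : ℝ, (∫ t in a..x, ((t - m : ℝ) : ℂ)) = ((g x : ℝ) : ℂ) := by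
    intro x
    rw [intervalIntegral.integral_ofReal, hint]
  set I0 : ℝ := ∫ x in a..b, (g x) ^ 2 with hI0
  have hgcont : Continuous fun x : ℝ => (g x) ^ 2 := by fun_prop
  have hI0pos : 0 < I0 := by
    refine intervalIntegral_pos_of_pos_on (hgcont.intervalIntegrable a b) (fun x hx => ?_) hab
    have h1 : 0 < x - a := by linarith [hx.1]
    have h2 : x - b < 0 := by linarith [hx.2]
    have hlt : g x < 0 := by
      have : g x = (x - a) * (x - b) / 2 := by rw [hg, hm]; ring
      rw [this]
      nlinarith
    rw [pow_two]
    exact mul_pos_of_neg_of_neg hlt hlt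
  set c : ℝ := (Real.sqrt I0)⁻¹ with hc
  have hc0 : 0 ≤ c := by positivity
  have hc2 : c ^ 2 * I0 = 1 := by
    show ((Real.sqrt I0)⁻¹) ^ 2 * I0 = 1
    rw [inv_pow, Real.sq_sqrt hI0pos.le]
    exact inv_mul_cancel₀ hI0pos.ne'
  refine ⟨fun t => (c : ℂ) * ((t - m : ℝ) : ℂ), ?_, ?_, ?_⟩
  · apply Continuous.intervalIntegrable
    fun_prop
  · rw [intervalIntegral.integral_const_mul, hFx b]
    have : g b = 0 := by rw [hg, hm]; ring
    rw [this]
    simp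
  · have hptw : ∀ x : ℝ, ‖∫ t in a..x, (c : ℂ) * ((t - m : ℝ) : ℂ)‖ ^ 2
        = c ^ 2 * (g x) ^ 2 := by
      intro x
      rw [intervalIntegral.integral_const_mul, hFx x, norm_mul, Complex.norm_real,
        Complex.norm_real, Real.norm_eq_abs, Real.norm_eq_abs, abs_of_nonneg hc0, mul_pow,
        sq_abs]
    simp_rw [hptw]
    rw [intervalIntegral.integral_const_mul, ← hI0, hc2]

set_option maxHeartbeats 1000000

/-- if the increments of the non-decreasing functions S_k over
subintervals of fixed positive length d of I = [a,b] tend to +∞ uniformly, then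
inf{ ∫_I|y'|² + ∫_I|y|² dS_k : y ∈ W̊¹₂(I), ‖y‖_{L²(I)} = 1 } → +∞.
(W̊¹₂(I) is represented via y(x) = ∫_a^x y'(t) dt with ∫_a^b y' = 0.) -/
theorem stieltjes_form_inf_tendsto (a b : ℝ) (hab : a < b) (S : ℕ → StieltjesFunction ℝ)
    (hS : ∀ d : ℝ, 0 < d → d ≤ b - a → ∀ C : ℝ, ∃ K : ℕ, ∀ k ≥ K,
      ∀ x y : ℝ, a ≤ x → y ≤ b → y - x = d → C ≤ S k y - S k x) :
    Tendsto (fun k : ℕ => sInf {v : ℝ | ∃ y' : ℝ → ℂ,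
        IntervalIntegrable (fun x => ‖y' x‖ ^ 2) volume a b ∧
        (∫ t in a..b, y' t) = 0 ∧
        (∫ x in a..b, ‖∫ t in a..x, y' t‖ ^ 2) = 1 ∧
        v = (∫ x in a..b, ‖y' x‖ ^ 2) +
          ∫ x in Set.Icc a b, ‖∫ t in a..x, y' t‖ ^ 2 ∂(S k).measure})
      atTop atTop := by
  have hL : 0 < b - a := by linarith
  rw [tendsto_atTop]
  intro C
  set L : ℝ := b - a with hLdef
  set C₁ : ℝ := max C 1 with hC₁def
  have hC₁1 : 1 ≤ C₁ := le_max_right _ _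
  have hC₁0 : 0 < C₁ := lt_of_lt_of_le one_pos hC₁1
  set d : ℝ := min L (1 / (8 * L * C₁)) with hddef
  have hd0 : 0 < d := lt_min hL (by positivity)
  have hdL : d ≤ L := min_le_left _ _
  have hdC : d * C₁ ≤ 1 / (8 * L) := by
    have h1 : d ≤ 1 / (8 * L * C₁) := min_le_right _ _
    calc d * C₁ ≤ (1 / (8 * L * C₁)) * C₁ := mul_le_mul_of_nonneg_right h1 hC₁0.le
      _ = 1 / (8 * L) := by field_simp
  obtain ⟨K, hK⟩ := hS d hd0 hdL (8 * L * C)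
  filter_upwards [eventually_ge_atTop K] with k hk
  -- the set is nonempty
  obtain ⟨w', hw1, hw2, hw3⟩ := exists_witness a b hab
  refine le_csInf ⟨_, w', hw1, hw2, hw3, rfl⟩ ?_
  rintro v ⟨y', hsq, hzero, hnorm, rfl⟩
  set D : ℝ := ∫ x in a..b, ‖y' x‖ ^ 2 with hDdef
  set μ : Measure ℝ := (S k).measure with hμdef
  have hD0 : 0 ≤ D :=
    intervalIntegral.integral_nonneg hab.le fun x _ => by positivity
  have hSig0 : 0 ≤ ∫ x in Set.Icc a b, ‖∫ t in a..x, y' t‖ ^ 2 ∂μ :=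
    setIntegral_nonneg measurableSet_Icc fun x _ => by positivity
  by_cases hDC : C ≤ D
  · linarith
  push_neg at hDC
  have hCpos : 0 < C := lt_of_le_of_lt hD0 hDC
  have hDC₁ : D ≤ C₁ := le_trans hDC.le (le_max_left _ _)
  -- pointwise bounds
  have hF1 : ∀ t ∈ Set.Icc a b, ‖∫ u in a..t, y' u‖ ^ 2 ≤ (t - a) * D := by
    intro t ht
    by_cases hP : IntervalIntegrable y' volume a t
    · have := holder_bound hsq le_rfl ht.1 ht.2 hP
      simpa [intervalIntegral.integral_same] using this
    · rw [intervalIntegral.integral_undef hP]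
      simp only [norm_zero]
      have : (0:ℝ) ≤ (t - a) * D := mul_nonneg (by linarith [ht.1]) hD0
      simpa using this
  -- the L² norm function is interval integrable
  have yInt : IntervalIntegrable (fun x => ‖∫ t in a..x, y' t‖ ^ 2) volume a b := by
    by_contra h
    rw [intervalIntegral.integral_undef h] at hnorm
    norm_num at hnorm
  have hadb : a + d ≤ b := by rw [hLdef] at hdL; linarith
  have hsubIcc : ∀ {s t : ℝ}, a ≤ s → t ≤ b → s ≤ t →
      Set.uIcc s t ⊆ Set.uIcc a b := by
    intro s t h1 h2 h3
    rw [Set.uIcc_of_le h3, Set.uIcc_of_le hab.le]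
    exact Set.Icc_subset_Icc h1 h2
  have yInt1 : IntervalIntegrable (fun x => ‖∫ t in a..x, y' t‖ ^ 2) volume a (a + d) :=
    yInt.mono_set (hsubIcc le_rfl hadb (by linarith))
  have yInt2 : IntervalIntegrable (fun x => ‖∫ t in a..x, y' t‖ ^ 2) volume (a + d) b :=
    yInt.mono_set (hsubIcc (by linarith) le_rfl hadb)
  have hsplit : (∫ x in a..(a+d), ‖∫ t in a..x, y' t‖ ^ 2)
      + (∫ x in (a+d)..b, ‖∫ t in a..x, y' t‖ ^ 2) = 1 := by
    rw [integral_add_adjacent_intervals yInt1 yInt2]; exact hnorm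
  have hsmall : (∫ x in a..(a+d), ‖∫ t in a..x, y' t‖ ^ 2) ≤ 1 / 8 := by
    have hb1 : (∫ x in a..(a+d), ‖∫ t in a..x, y' t‖ ^ 2)
        ≤ ∫ _x in a..(a+d), d * C₁ := by
      refine intervalIntegral.integral_mono_on (by linarith) yInt1
        intervalIntegrable_const (fun x hx => ?_)
      have h1 := hF1 x ⟨hx.1, hx.2.trans hadb⟩
      have h2 : (x - a) * D ≤ d * C₁ :=
        mul_le_mul (by linarith [hx.2]) hDC₁ hD0 hd0.le
      linarith
    rw [intervalIntegral.integral_const, smul_eq_mul] at hb1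
    have : (a + d - a) * (d * C₁) ≤ L * (1 / (8 * L)) := by
      have h3 : a + d - a = d := by ring
      rw [h3]
      have h4 : 0 ≤ d * C₁ := by positivity
      calc d * (d * C₁) ≤ L * (d * C₁) := mul_le_mul_of_nonneg_right hdL h4
        _ ≤ L * (1 / (8 * L)) := mul_le_mul_of_nonneg_left hdC hL.le
    have h5 : L * (1 / (8 * L)) = 1 / 8 := by
      field_simp
    linarith
  obtain ⟨x₀, hx₀mem, hx₀⟩ : ∃ x₀ ∈ Set.Icc (a + d) b,
      1 / (2 * L) ≤ ‖∫ t in a..x₀, y' t‖ ^ 2 := by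
    by_contra hcon
    push_neg at hcon
    have hb2 : (∫ x in (a+d)..b, ‖∫ t in a..x, y' t‖ ^ 2)
        ≤ ∫ _x in (a+d)..b, 1 / (2 * L) := by
      refine intervalIntegral.integral_mono_on hadb yInt2
        intervalIntegrable_const (fun x hx => (hcon x hx).le)
    rw [intervalIntegral.integral_const, smul_eq_mul] at hb2
    have h6 : (b - (a + d)) * (1 / (2 * L)) ≤ 1 / 2 := by
      have h7 : b - (a + d) ≤ L := by rw [hLdef]; linarith
      have h8 : 0 ≤ 1 / (2 * L) := by positivity
      calc (b - (a + d)) * (1 / (2 * L)) ≤ L * (1 / (2 * L)) :=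
            mul_le_mul_of_nonneg_right h7 h8
        _ = 1 / 2 := by
            field_simp
    linarith
  have hPx₀ : IntervalIntegrable y' volume a x₀ := by
    by_contra h
    rw [intervalIntegral.integral_undef h] at hx₀
    have : 0 < 1 / (2 * L) := by positivity
    simp only [norm_zero] at hx₀
    nlinarith
  have hax₀ : a ≤ x₀ := le_trans (by linarith) hx₀mem.1
  -- lower bound on Ioc (x₀ - d) x₀
  have hbound : ∀ t ∈ Set.Ioc (x₀ - d) x₀,
      1 / (8 * L) ≤ ‖∫ u in a..t, y' u‖ ^ 2 := by
    intro t ht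
    have hat : a ≤ t := by linarith [hx₀mem.1, ht.1]
    have hdiff : ‖(∫ u in a..x₀, y' u) - ∫ u in a..t, y' u‖ ^ 2 ≤ (x₀ - t) * D :=
      holder_bound hsq hat ht.2 hx₀mem.2 hPx₀
    have hsmall2 : (x₀ - t) * D ≤ 1 / (8 * L) := by
      have : (x₀ - t) * D ≤ d * C₁ :=
        mul_le_mul (by linarith [ht.1]) hDC₁ hD0 hd0.le
      linarith
    have htri : ‖∫ u in a..x₀, y' u‖
        ≤ ‖∫ u in a..t, y' u‖ + ‖(∫ u in a..x₀, y' u) - ∫ u in a..t, y' u‖ := by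
      have heq : (∫ u in a..t, y' u) + ((∫ u in a..x₀, y' u) - ∫ u in a..t, y' u)
          = ∫ u in a..x₀, y' u := by ring
      calc ‖∫ u in a..x₀, y' u‖
          = ‖(∫ u in a..t, y' u) + ((∫ u in a..x₀, y' u) - ∫ u in a..t, y' u)‖ := by
            rw [heq]
        _ ≤ _ := norm_add_le _ _
    have hsq' : ‖∫ u in a..x₀, y' u‖ ^ 2
        ≤ (‖∫ u in a..t, y' u‖ + ‖(∫ u in a..x₀, y' u) - ∫ u in a..t, y' u‖) ^ 2 :=
      pow_le_pow_left₀ (norm_nonneg _) htri 2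
    have hv2 : ‖(∫ u in a..x₀, y' u) - ∫ u in a..t, y' u‖ ^ 2 ≤ 1 / (8 * L) :=
      hdiff.trans hsmall2
    have e1 : 1 / (2 * L) = 4 * (1 / (8 * L)) := by
      field_simp
      ring
    nlinarith [hsq', hx₀, hv2, e1, norm_nonneg (∫ u in a..t, y' u),
      norm_nonneg ((∫ u in a..x₀, y' u) - ∫ u in a..t, y' u),
      sq_nonneg (‖∫ u in a..t, y' u‖
        - ‖(∫ u in a..x₀, y' u) - ∫ u in a..t, y' u‖)]
  -- measurability and integrability w.r.t. μ on Icc a b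
  have hfin : μ (Set.Icc a b) < ⊤ := lt_of_le_of_lt (measure_mono (show Set.Icc a b ⊆ Set.Ioc (a - 1) b from fun x hx => ⟨by linarith [hx.1], hx.2⟩)) (by rw [hμdef, StieltjesFunction.measure_Ioc]; exact ENNReal.ofReal_lt_top)
  set E : Set ℝ := {t | IntervalIntegrable y' volume a t} ∩ Set.Icc a b with hEdef
  have hEord : E.OrdConnected := by
    constructor
    intro x hx y hy z hz
    refine ⟨?_, ⟨hx.2.1.trans hz.1, hz.2.trans hy.2.2⟩⟩
    have haz : a ≤ z := hx.2.1.trans hz.1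
    have hay : a ≤ y := hy.2.1
    exact hy.1.mono_set (by
      rw [Set.uIcc_of_le haz, Set.uIcc_of_le hay]
      exact Set.Icc_subset_Icc le_rfl hz.2)
  have hmeasE : MeasurableSet E := hEord.measurableSet
  have hcontF : ContinuousOn (fun x => ∫ u in a..x, y' u) E := by
    intro t ht
    rw [Metric.continuousWithinAt_iff]
    intro ε hε
    refine ⟨ε ^ 2 / (D + 1), by positivity, ?_⟩
    intro s hs hdist
    have hD1 : (0:ℝ) < D + 1 := by linarith
    rw [Real.dist_eq] at hdist
    have habs := abs_lt.mp hdist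
    have hkey : ‖(∫ u in a..s, y' u) - ∫ u in a..t, y' u‖ ^ 2 < ε ^ 2 := by
      rcases le_total s t with hord | hord
      · have hb1 := holder_bound hsq hs.2.1 hord ht.2.2 ht.1
        have h9 : (t - s) * D ≤ (t - s) * (D + 1) :=
          mul_le_mul_of_nonneg_left (show D ≤ D + 1 by linarith)
            (show (0:ℝ) ≤ t - s by linarith)
        have h10 : (t - s) * (D + 1) < ε ^ 2 :=
          (lt_div_iff₀ hD1).mp (by linarith [habs.1])
        calc ‖(∫ u in a..s, y' u) - ∫ u in a..t, y' u‖ ^ 2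
            = ‖(∫ u in a..t, y' u) - ∫ u in a..s, y' u‖ ^ 2 := by rw [norm_sub_rev]
          _ ≤ (t - s) * D := hb1
          _ < ε ^ 2 := by linarith
      · have hb1 := holder_bound hsq ht.2.1 hord hs.2.2 hs.1
        have h9 : (s - t) * D ≤ (s - t) * (D + 1) :=
          mul_le_mul_of_nonneg_left (show D ≤ D + 1 by linarith)
            (show (0:ℝ) ≤ s - t by linarith)
        have h10 : (s - t) * (D + 1) < ε ^ 2 :=
          (lt_div_iff₀ hD1).mp (by linarith [habs.2])
        calc ‖(∫ u in a..s, y' u) - ∫ u in a..t, y' u‖ ^ 2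
            ≤ (s - t) * D := hb1
          _ < ε ^ 2 := by linarith
    have := lt_of_pow_lt_pow_left₀ 2 hε.le hkey
    rwa [dist_eq_norm]
  have hFm : AEStronglyMeasurable (fun x => ∫ u in a..x, y' u) (μ.restrict E) :=
    hcontF.aestronglyMeasurable hmeasE
  have hind : AEStronglyMeasurable (E.indicator fun x => ∫ u in a..x, y' u) μ :=
    (aestronglyMeasurable_indicator_iff hmeasE).mpr hFm
  have hyF : ∀ x ∈ Set.Icc a b,
      (∫ u in a..x, y' u) = (E.indicator fun x => ∫ u in a..x, y' u) x := by
    intro x hx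
    by_cases hP : IntervalIntegrable y' volume a x
    · have hxE : x ∈ E := by rw [hEdef]; exact ⟨hP, hx⟩
      rw [Set.indicator_of_mem hxE]
    · have hxE : x ∉ E := by rw [hEdef]; rintro ⟨h1, -⟩; exact hP h1
      rw [Set.indicator_of_notMem hxE, intervalIntegral.integral_undef hP]
  have hFmeas : AEStronglyMeasurable (fun x => ∫ u in a..x, y' u)
      (μ.restrict (Set.Icc a b)) := by
    refine (hind.restrict).congr ?_
    refine (ae_restrict_iff' measurableSet_Icc).mpr (ae_of_all _ fun x hx => ?_)
    exact (hyF x hx).symm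
  have hμInt : IntegrableOn (fun x => ‖∫ u in a..x, y' u‖ ^ 2) (Set.Icc a b) μ := by
    refine ⟨(continuous_pow 2).comp_aestronglyMeasurable hFmeas.norm, ?_⟩
    refine HasFiniteIntegral.restrict_of_bounded (C := L * C₁) hfin ?_
    refine (ae_restrict_iff' measurableSet_Icc).mpr (ae_of_all _ fun x hx => ?_)
    rw [Real.norm_of_nonneg (by positivity)]
    have h11 := hF1 x hx
    have h12 : (x - a) * D ≤ L * C₁ :=
      mul_le_mul (by rw [hLdef]; linarith [hx.2]) hDC₁ hD0 hL.le
    linarith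
  -- the Stieltjes integral bound
  have hsub' : Set.Ioc (x₀ - d) x₀ ⊆ Set.Icc a b :=
    Set.Ioc_subset_Icc_self.trans (Set.Icc_subset_Icc (by linarith [hx₀mem.1]) hx₀mem.2)
  have hSig1 : (∫ x in Set.Ioc (x₀ - d) x₀, ‖∫ u in a..x, y' u‖ ^ 2 ∂μ)
      ≤ ∫ x in Set.Icc a b, ‖∫ u in a..x, y' u‖ ^ 2 ∂μ :=
    setIntegral_mono_set hμInt (Filter.Eventually.of_forall fun x => by positivity)
      hsub'.eventuallyLE
  have hμIoc : μ (Set.Ioc (x₀ - d) x₀) ≠ ⊤ :=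
    ((measure_mono hsub').trans_lt hfin).ne
  have hSig2 : (1 / (8 * L)) * (μ (Set.Ioc (x₀ - d) x₀)).toReal
      ≤ ∫ x in Set.Ioc (x₀ - d) x₀, ‖∫ u in a..x, y' u‖ ^ 2 ∂μ :=
    setIntegral_ge_of_const_le_real measurableSet_Ioc hμIoc hbound
      (hμInt.mono_set hsub')
  have htoReal : (μ (Set.Ioc (x₀ - d) x₀)).toReal = S k x₀ - S k (x₀ - d) := by
    rw [hμdef, StieltjesFunction.measure_Ioc,
      ENNReal.toReal_ofReal (sub_nonneg.2 ((S k).mono (by linarith)))]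
  have hSk : 8 * L * C ≤ S k x₀ - S k (x₀ - d) :=
    hK k hk (x₀ - d) x₀ (by linarith [hx₀mem.1]) hx₀mem.2 (by ring)
  have hfinal : C ≤ (1 / (8 * L)) * (S k x₀ - S k (x₀ - d)) := by
    have h13 : C = (1 / (8 * L)) * (8 * L * C) := by field_simp
    rw [h13]
    exact mul_le_mul_of_nonneg_left hSk (by positivity)
  rw [htoReal] at hSig2
  linarith
end

section
/- Let S_k be a sequence of real-valued non-decreasing functions on I = [a,b], and 𝔩_k[y] = ∫_I |y'|² dx + ∫_I |y|² dS_k(x) on W̊¹₂(I). If inf{𝔩_k[y] : ‖y‖_{L²(I)} = 1} → +∞, then for every 0 < d ≤ b−a, S_k(y) − S_k(x) → +∞ uniformly over x < y in I with y − x = d. -/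
open MeasureTheory intervalIntegral Filter

lemma stieltjes_tent_key (a b x y d : ℝ) (S : StieltjesFunction ℝ)
    (hax : a ≤ x) (hyb : y ≤ b) (hd0 : 0 < d) (hyx : y - x = d) :
    ∃ y' : ℝ → ℂ,
      IntervalIntegrable (fun x => ‖y' x‖ ^ 2) volume a b ∧
      (∫ t in a..b, y' t) = 0 ∧
      (∫ x in a..b, ‖∫ t in a..x, y' t‖ ^ 2) = 1 ∧
      (∫ x in a..b, ‖y' x‖ ^ 2) +
          (∫ x in Set.Icc a b, ‖∫ t in a..x, y' t‖ ^ 2 ∂S.measure)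
        ≤ 12 / d ^ 2 + (3 / d) * (S y - S x) := by
  have hxy : x < y := by linarith
  have hab : a ≤ b := by linarith
  set m : ℝ := (x + y) / 2 with hm
  have hxm : x ≤ m := by rw [hm]; linarith
  have hmy : m ≤ y := by rw [hm]; linarith
  have hd3 : (0:ℝ) < d ^ 3 := by positivity
  set c : ℝ := Real.sqrt (12 / d ^ 3) with hcdef
  have hc0 : 0 ≤ c := Real.sqrt_nonneg _
  have hc2 : c ^ 2 = 12 / d ^ 3 := Real.sq_sqrt (by positivity)
  set f : ℝ → ℝ := fun t => if t ≤ x then 0 else if t ≤ m then c else if t ≤ y then -c else 0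
    with hfdef
  have hfm : Measurable f := by
    apply Measurable.ite measurableSet_Iic measurable_const
    apply Measurable.ite measurableSet_Iic measurable_const
    exact Measurable.ite measurableSet_Iic measurable_const measurable_const
  have hfb : ∀ t, |f t| ≤ c := by
    intro t
    simp only [hfdef]
    split_ifs <;> simp [abs_of_nonneg hc0, hc0]
  have hfi : ∀ u v : ℝ, IntervalIntegrable f volume u v := by
    intro u v
    rw [intervalIntegrable_iff]
    apply Measure.integrableOn_of_bounded (M := c) measure_Ioc_lt_top.ne
      hfm.aestronglyMeasurable
    exact ae_of_all _ fun t => by rw [Real.norm_eq_abs]; exact hfb t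
  have hf2i : ∀ u v : ℝ, IntervalIntegrable (fun t => f t ^ 2) volume u v := by
    intro u v
    rw [intervalIntegrable_iff]
    apply Measure.integrableOn_of_bounded (M := c ^ 2) measure_Ioc_lt_top.ne
      ((hfm.pow_const 2).aestronglyMeasurable)
    refine ae_of_all _ fun t => ?_
    rw [Real.norm_eq_abs, abs_pow]
    exact pow_le_pow_left₀ (abs_nonneg _) (hfb t) 2
  -- values of the primitive
  have h0 : ∀ s, s ≤ x → (∫ t in a..s, f t) = 0 := by
    intro s hs
    rw [intervalIntegral.integral_congr (g := fun _ => (0:ℝ)) ?_, intervalIntegral.integral_const]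
    · simp
    · intro t ht
      have ht' : t ≤ x := le_trans ht.2 (sup_le hax hs)
      simp only [hfdef, if_pos ht']
  have h1 : ∀ s, x ≤ s → s ≤ m → (∫ t in a..s, f t) = c * (s - x) := by
    intro s hxs hsm
    rw [← integral_add_adjacent_intervals (hfi a x) (hfi x s), h0 x le_rfl]
    have : (∫ t in x..s, f t) = ∫ t in x..s, c := by
      apply intervalIntegral.integral_congr_ae
      rw [Set.uIoc_of_le hxs]
      refine ae_of_all _ fun t ht => ?_
      simp only [hfdef]
      rw [if_neg (not_le.mpr ht.1), if_pos (ht.2.trans hsm)]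
    rw [this, intervalIntegral.integral_const, smul_eq_mul]
    ring
  have h2 : ∀ s, m ≤ s → s ≤ y → (∫ t in a..s, f t) = c * (y - s) := by
    intro s hms hsy
    rw [← integral_add_adjacent_intervals (hfi a m) (hfi m s), h1 m hxm le_rfl]
    have : (∫ t in m..s, f t) = ∫ t in m..s, (-c) := by
      apply intervalIntegral.integral_congr_ae
      rw [Set.uIoc_of_le hms]
      refine ae_of_all _ fun t ht => ?_
      simp only [hfdef]
      rw [if_neg (not_le.mpr (lt_of_le_of_lt hxm ht.1)),
        if_neg (not_le.mpr ht.1), if_pos (ht.2.trans hsy)]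
    rw [this, intervalIntegral.integral_const, smul_eq_mul, hm]
    ring
  have h3 : ∀ s, y ≤ s → (∫ t in a..s, f t) = 0 := by
    intro s hys
    rw [← integral_add_adjacent_intervals (hfi a y) (hfi y s), h2 y hmy le_rfl]
    have : (∫ t in y..s, f t) = ∫ t in y..s, (0:ℝ) := by
      apply intervalIntegral.integral_congr_ae
      rw [Set.uIoc_of_le hys]
      refine ae_of_all _ fun t ht => ?_
      simp only [hfdef]
      rw [if_neg (not_le.mpr (lt_of_le_of_lt hxm (lt_of_le_of_lt hmy ht.1))),
        if_neg (not_le.mpr (lt_of_le_of_lt hmy ht.1)), if_neg (not_le.mpr ht.1)]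
    rw [this]
    simp
  set g : ℝ → ℝ := fun s => max 0 (min (s - x) (y - s)) with hgdef
  have hgcont : Continuous g := by
    exact continuous_const.max ((continuous_id.sub continuous_const).min
      (continuous_const.sub continuous_id))
  have hg0 : ∀ s, 0 ≤ g s := fun s => le_max_left _ _
  have hY : ∀ s, a ≤ s → (∫ t in a..s, f t) = c * g s := by
    intro s hs
    rcases le_total s x with h | h
    · rw [h0 s h]
      have : g s = 0 := by
        simp only [hgdef]
        rw [max_eq_left]
        exact le_trans (min_le_left _ _) (by linarith)
      rw [this, mul_zero]
    rcases le_total s m with h' | h'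
    · rw [h1 s h h']
      have : g s = s - x := by
        simp only [hgdef]
        rw [min_eq_left (by rw [hm] at h'; linarith), max_eq_right (by linarith)]
      rw [this]
    rcases le_total s y with h'' | h''
    · rw [h2 s h' h'']
      have : g s = y - s := by
        simp only [hgdef]
        rw [min_eq_right (by rw [hm] at h'; linarith), max_eq_right (by linarith)]
      rw [this]
    · rw [h3 s h'']
      have : g s = 0 := by
        simp only [hgdef]
        rw [max_eq_left]
        exact le_trans (min_le_right _ _) (by linarith)
      rw [this, mul_zero]
  have hnormf : ∀ t : ℝ, ‖((f t : ℂ))‖ ^ 2 = f t ^ 2 := fun t => by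
    rw [Complex.norm_real, Real.norm_eq_abs, sq_abs]
  have hYc : ∀ s, (∫ t in a..s, ((f t : ℂ))) = ((∫ t in a..s, f t : ℝ) : ℂ) := fun s =>
    RCLike.intervalIntegral_ofReal
  have hnormY : ∀ s, ‖∫ t in a..s, ((f t : ℂ))‖ ^ 2 = (∫ t in a..s, f t) ^ 2 := fun s => by
    rw [hYc, Complex.norm_real, Real.norm_eq_abs, sq_abs]
  have hcg : Continuous fun s => (c * g s) ^ 2 := (continuous_const.mul hgcont).pow 2
  -- the L² norm computation
  have epart1 : (∫ s in a..b, ‖((f s : ℂ))‖ ^ 2) = 12 / d ^ 2 := by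
    simp only [hnormf]
    rw [← integral_add_adjacent_intervals (hf2i a x) (hf2i x b),
        ← integral_add_adjacent_intervals (hf2i x y) (hf2i y b)]
    have p1 : (∫ s in a..x, f s ^ 2) = 0 := by
      rw [intervalIntegral.integral_congr (g := fun _ => (0:ℝ)) ?_]
      · simp
      · intro t ht
        have htx : t ≤ x := le_trans ht.2 (sup_le hax le_rfl)
        simp only [hfdef]
        rw [if_pos htx]
        ring
    have p2 : (∫ s in x..y, f s ^ 2) = c ^ 2 * (y - x) := by
      have e : (∫ s in x..y, f s ^ 2) = ∫ _ in x..y, c ^ 2 := by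
        apply intervalIntegral.integral_congr_ae
        rw [Set.uIoc_of_le (le_of_lt hxy)]
        refine ae_of_all _ fun t ht => ?_
        simp only [hfdef]
        rw [if_neg (not_le.mpr ht.1)]
        rcases le_or_gt t m with h | h
        · rw [if_pos h]
        · rw [if_neg (not_le.mpr h), if_pos ht.2]; ring
      rw [e, intervalIntegral.integral_const, smul_eq_mul]; ring
    have p3 : (∫ s in y..b, f s ^ 2) = 0 := by
      have e : (∫ s in y..b, f s ^ 2) = ∫ _ in y..b, (0:ℝ) := by
        apply intervalIntegral.integral_congr_ae
        rw [Set.uIoc_of_le hyb]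
        refine ae_of_all _ fun t ht => ?_
        simp only [hfdef]
        rw [if_neg (not_le.mpr (lt_of_le_of_lt hxm (lt_of_le_of_lt hmy ht.1))),
          if_neg (not_le.mpr (lt_of_le_of_lt hmy ht.1)), if_neg (not_le.mpr ht.1)]
        ring
      rw [e]; simp
    rw [p1, p2, p3, hc2, hyx]
    field_simp
    ring
  -- normalization
  have epart2 : (∫ s in a..b, ‖∫ t in a..s, ((f t : ℂ))‖ ^ 2) = 1 := by
    have e1 : (∫ s in a..b, ‖∫ t in a..s, ((f t : ℂ))‖ ^ 2) = ∫ s in a..b, (c * g s) ^ 2 := by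
      apply intervalIntegral.integral_congr
      intro s hs
      rw [Set.uIcc_of_le hab] at hs
      simp only [hnormY, hY s hs.1]
    have s1 : (∫ s in a..b, (c * g s) ^ 2)
        = (∫ s in a..x, (c * g s) ^ 2) + ∫ s in x..b, (c * g s) ^ 2 :=
      (integral_add_adjacent_intervals (hcg.intervalIntegrable a x)
        (hcg.intervalIntegrable x b)).symm
    have s2 : (∫ s in x..b, (c * g s) ^ 2)
        = (∫ s in x..m, (c * g s) ^ 2) + ∫ s in m..b, (c * g s) ^ 2 :=
      (integral_add_adjacent_intervals (hcg.intervalIntegrable x m)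
        (hcg.intervalIntegrable m b)).symm
    have s3 : (∫ s in m..b, (c * g s) ^ 2)
        = (∫ s in m..y, (c * g s) ^ 2) + ∫ s in y..b, (c * g s) ^ 2 :=
      (integral_add_adjacent_intervals (hcg.intervalIntegrable m y)
        (hcg.intervalIntegrable y b)).symm
    rw [e1, s1, s2, s3]
    have p1 : (∫ s in a..x, (c * g s) ^ 2) = 0 := by
      rw [intervalIntegral.integral_congr (g := fun _ => (0:ℝ)) ?_]
      · simp
      · intro t ht
        have htx : t ≤ x := le_trans ht.2 (sup_le hax le_rfl)
        have : g t = 0 := by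
          simp only [hgdef]
          rw [max_eq_left]
          exact le_trans (min_le_left _ _) (by linarith)
        simp only []
        rw [this]
        ring
    have p2 : (∫ s in x..m, (c * g s) ^ 2) = c ^ 2 * ((m - x) ^ 3 / 3) := by
      have e : (∫ s in x..m, (c * g s) ^ 2) = ∫ s in x..m, c ^ 2 * (s - x) ^ 2 := by
        apply intervalIntegral.integral_congr
        intro t ht
        rw [Set.uIcc_of_le hxm] at ht
        have : g t = t - x := by
          simp only [hgdef]
          rw [min_eq_left (by rw [hm] at ht; linarith [ht.2]),
            max_eq_right (by linarith [ht.1])]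
        simp only []
        rw [this]
        ring
      rw [e, intervalIntegral.integral_const_mul,
        intervalIntegral.integral_comp_sub_right (fun u => u ^ 2) x, integral_pow]
      norm_num
    have p3 : (∫ s in m..y, (c * g s) ^ 2) = c ^ 2 * (-((m - y) ^ 3) / 3) := by
      have e : (∫ s in m..y, (c * g s) ^ 2) = ∫ s in m..y, c ^ 2 * (s - y) ^ 2 := by
        apply intervalIntegral.integral_congr
        intro t ht
        rw [Set.uIcc_of_le hmy] at ht
        have : g t = y - t := by
          simp only [hgdef]
          rw [min_eq_right (by rw [hm] at ht; linarith [ht.1]),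
            max_eq_right (by linarith [ht.2])]
        simp only []
        rw [this]
        ring
      rw [e, intervalIntegral.integral_const_mul,
        intervalIntegral.integral_comp_sub_right (fun u => u ^ 2) y, integral_pow]
      norm_num
    have p4 : (∫ s in y..b, (c * g s) ^ 2) = 0 := by
      rw [intervalIntegral.integral_congr (g := fun _ => (0:ℝ)) ?_]
      · simp
      · intro t ht
        have hty : y ⊓ b ≤ t := ht.1
        rw [inf_eq_left.mpr hyb] at hty
        have : g t = 0 := by
          simp only [hgdef]
          rw [max_eq_left]
          exact le_trans (min_le_right _ _) (by linarith)
        simp only []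
        rw [this]
        ring
    have em : m - x = d / 2 := by rw [hm]; linarith
    have em' : m - y = -(d / 2) := by rw [hm]; linarith
    rw [p1, p2, p3, p4, em, em', hc2]
    field_simp
    ring
  -- the measure part bound
  have hμ : (∫ s in Set.Icc a b, ‖∫ t in a..s, ((f t : ℂ))‖ ^ 2 ∂S.measure)
      ≤ 3 / d * (S y - S x) := by
    have e : (∫ s in Set.Icc a b, ‖∫ t in a..s, ((f t : ℂ))‖ ^ 2 ∂S.measure)
        = ∫ s in Set.Icc a b, (c * g s) ^ 2 ∂S.measure :=
      setIntegral_congr_fun measurableSet_Icc (fun s hs => by simp only [hnormY, hY s hs.1])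
    rw [e]
    set φ : ℝ → ℝ := Set.indicator (Set.Ioo x y) (fun _ => 3 / d) with hφ
    have hle : ∀ s, (c * g s) ^ 2 ≤ φ s := by
      intro s
      by_cases hs : s ∈ Set.Ioo x y
      · rw [hφ, Set.indicator_of_mem hs]
        have hg1 : g s ≤ d / 2 := by
          apply max_le (by linarith)
          rcases le_total (s - x) (y - s) with h | h
          · rw [min_eq_left h]; linarith
          · rw [min_eq_right h]; linarith
        have e2 : (c * g s) ^ 2 = c ^ 2 * (g s) ^ 2 := by ring
        rw [e2, hc2]
        calc 12 / d ^ 3 * g s ^ 2 ≤ 12 / d ^ 3 * (d / 2) ^ 2 := by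
              exact mul_le_mul_of_nonneg_left (pow_le_pow_left₀ (hg0 s) hg1 2) (by positivity)
          _ = 3 / d := by field_simp; ring
      · rw [hφ, Set.indicator_of_notMem hs]
        have : g s = 0 := by
          rw [Set.mem_Ioo, not_and_or] at hs
          simp only [hgdef]
          rcases hs with h | h
          · push_neg at h; rw [max_eq_left]; exact le_trans (min_le_left _ _) (by linarith)
          · push_neg at h; rw [max_eq_left]; exact le_trans (min_le_right _ _) (by linarith)
        rw [this]
        simp
    have hμIoc : S.measure (Set.Ioc x y) < ⊤ := by
      rw [S.measure_Ioc]; exact ENNReal.ofReal_lt_top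
    have hInt1 : IntegrableOn (fun s => (c * g s) ^ 2) (Set.Icc a b) S.measure :=
      hcg.integrableOn_Icc
    have hInt2 : IntegrableOn φ (Set.Icc a b) S.measure := by
      apply Integrable.integrableOn
      rw [hφ, integrable_indicator_iff measurableSet_Ioo]
      refine (integrableOn_const_iff).mpr (Or.inr ?_)
      exact lt_of_le_of_lt (measure_mono Set.Ioo_subset_Ioc_self) hμIoc
    have hsub : S.measure (Set.Icc a b ∩ Set.Ioo x y) ≤ S.measure (Set.Ioc x y) :=
      measure_mono (Set.inter_subset_right.trans Set.Ioo_subset_Ioc_self)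
    have htr : (S.measure (Set.Icc a b ∩ Set.Ioo x y)).toReal ≤ S y - S x := by
      rw [S.measure_Ioc] at hsub
      calc (S.measure (Set.Icc a b ∩ Set.Ioo x y)).toReal
          ≤ (ENNReal.ofReal (S y - S x)).toReal :=
            ENNReal.toReal_mono ENNReal.ofReal_ne_top hsub
        _ = S y - S x := ENNReal.toReal_ofReal (sub_nonneg.mpr (S.mono hxy.le))
    calc (∫ s in Set.Icc a b, (c * g s) ^ 2 ∂S.measure)
        ≤ ∫ s in Set.Icc a b, φ s ∂S.measure :=
          setIntegral_mono_on hInt1 hInt2 measurableSet_Icc (fun s _ => hle s)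
      _ = (S.measure (Set.Icc a b ∩ Set.Ioo x y)).toReal * (3 / d) := by
          rw [hφ, setIntegral_indicator measurableSet_Ioo, setIntegral_const, smul_eq_mul]; rfl
      _ ≤ 3 / d * (S y - S x) := by
          rw [mul_comm]
          exact mul_le_mul_of_nonneg_left htr (by positivity)
  refine ⟨fun t => ((f t : ℂ)), ?_, ?_, ?_, ?_⟩
  · simp only [hnormf]
    exact hf2i a b
  · rw [hYc b, h3 b hyb, Complex.ofReal_zero]
  · exact epart2
  · rw [epart1]
    exact add_le_add_right hμ _

/-- converse: if
inf{ ∫_I|y'|² + ∫_I|y|² dS_k : y ∈ W̊¹₂(I), ‖y‖_{L²(I)} = 1 } → +∞, then for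
every 0 < d ≤ b − a the increments S_k(y) − S_k(x) over pairs with y − x = d
tend to +∞ uniformly. -/
theorem stieltjes_form_inf_tendsto_converse (a b : ℝ) (hab : a < b)
    (S : ℕ → StieltjesFunction ℝ)
    (hinf : Tendsto (fun k : ℕ => sInf {v : ℝ | ∃ y' : ℝ → ℂ,
        IntervalIntegrable (fun x => ‖y' x‖ ^ 2) volume a b ∧
        (∫ t in a..b, y' t) = 0 ∧
        (∫ x in a..b, ‖∫ t in a..x, y' t‖ ^ 2) = 1 ∧
        v = (∫ x in a..b, ‖y' x‖ ^ 2) +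
          ∫ x in Set.Icc a b, ‖∫ t in a..x, y' t‖ ^ 2 ∂(S k).measure})
      atTop atTop) :
    ∀ d : ℝ, 0 < d → d ≤ b - a → ∀ C : ℝ, ∃ K : ℕ, ∀ k ≥ K,
      ∀ x y : ℝ, a ≤ x → y ≤ b → y - x = d → C ≤ S k y - S k x := by
  intro d hd0 hdb C
  have hev : ∀ᶠ k in atTop, 12 / d ^ 2 + 3 / d * C ≤ sInf {v : ℝ | ∃ y' : ℝ → ℂ,
      IntervalIntegrable (fun x => ‖y' x‖ ^ 2) volume a b ∧
      (∫ t in a..b, y' t) = 0 ∧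
      (∫ x in a..b, ‖∫ t in a..x, y' t‖ ^ 2) = 1 ∧
      v = (∫ x in a..b, ‖y' x‖ ^ 2) +
        ∫ x in Set.Icc a b, ‖∫ t in a..x, y' t‖ ^ 2 ∂(S k).measure} :=
    hinf.eventually (eventually_ge_atTop _)
  obtain ⟨K, hK⟩ := eventually_atTop.mp hev
  refine ⟨K, fun k hk x y hax hyb hyx => ?_⟩
  by_contra hC
  push_neg at hC
  obtain ⟨y', h1, h2, h3, h4⟩ := stieltjes_tent_key a b x y d (S k) hax hyb hd0 hyx
  set v : ℝ := (∫ x in a..b, ‖y' x‖ ^ 2) +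
      ∫ x in Set.Icc a b, ‖∫ t in a..x, y' t‖ ^ 2 ∂(S k).measure with hv
  have hmem : v ∈ {v : ℝ | ∃ y' : ℝ → ℂ,
      IntervalIntegrable (fun x => ‖y' x‖ ^ 2) volume a b ∧
      (∫ t in a..b, y' t) = 0 ∧
      (∫ x in a..b, ‖∫ t in a..x, y' t‖ ^ 2) = 1 ∧
      v = (∫ x in a..b, ‖y' x‖ ^ 2) +
        ∫ x in Set.Icc a b, ‖∫ t in a..x, y' t‖ ^ 2 ∂(S k).measure} :=
    ⟨y', h1, h2, h3, hv⟩
  have hbdd : BddBelow {v : ℝ | ∃ y' : ℝ → ℂ,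
      IntervalIntegrable (fun x => ‖y' x‖ ^ 2) volume a b ∧
      (∫ t in a..b, y' t) = 0 ∧
      (∫ x in a..b, ‖∫ t in a..x, y' t‖ ^ 2) = 1 ∧
      v = (∫ x in a..b, ‖y' x‖ ^ 2) +
        ∫ x in Set.Icc a b, ‖∫ t in a..x, y' t‖ ^ 2 ∂(S k).measure} := by
    refine ⟨0, fun w hw => ?_⟩
    obtain ⟨z, _, _, _, hwz⟩ := hw
    rw [hwz]
    have n1 : 0 ≤ ∫ x in a..b, ‖z x‖ ^ 2 :=
      intervalIntegral.integral_nonneg hab.le (fun u _ => by positivity)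
    have n2 : 0 ≤ ∫ x in Set.Icc a b, ‖∫ t in a..x, z t‖ ^ 2 ∂(S k).measure :=
      setIntegral_nonneg measurableSet_Icc (fun u _ => by positivity)
    linarith
  have hinfle := csInf_le hbdd hmem
  have hkk := hK k hk
  have hstep : 3 / d * (S k y - S k x) < 3 / d * C :=
    mul_lt_mul_of_pos_left hC (by positivity)
  linarith
end

section
/- Let s ∈ L²[0,a] and ψ(x) = exp(∫ₓ^a conj(s(t)) dt), the solution of ψ' + conj(s) ψ = 0 with ψ(a) = 1. Then for every δ > 0 and A ∈ ℂ there exists an absolutely continuous function ω on [0,a] with ω(0) = A, ω(a) = 0, ∫₀^a ω(x) conj(ψ(x)) dx = 0, and ‖ω‖_{L²[0,a]} < δ. -/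
open MeasureTheory intervalIntegral

private lemma tentCont (ε : ℝ) (hε : 0 < ε) (A : ℂ) :
    Continuous fun t : ℝ => (if t ≤ ε then (-2*A/ε)*(1 - (t:ℂ)/ε) else 0) := by
  apply Continuous.if_le
  · continuity
  · exact continuous_const
  · exact continuous_id
  · exact continuous_const
  · intro t ht; subst ht
    rw [div_self (by exact_mod_cast hε.ne' : (t:ℂ) ≠ 0)]; ring

private lemma tentCont0 (ε : ℝ) (hε : 0 < ε) (A : ℂ) :
    Continuous fun x : ℝ => (if x ≤ ε then A*(1 - (x:ℂ)/ε)^2 else 0) := by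
  apply Continuous.if_le
  · continuity
  · exact continuous_const
  · exact continuous_id
  · exact continuous_const
  · intro t ht; subst ht
    rw [div_self (by exact_mod_cast hε.ne' : (t:ℂ) ≠ 0)]; ring

private lemma tentDeriv (ε : ℝ) (hε : 0 < ε) (A : ℂ) (t : ℝ) :
    HasDerivAt (fun y : ℝ => A*(1 - (y:ℂ)/ε)^2) ((-2*A/ε)*(1 - (t:ℂ)/ε)) t := by
  have h : HasDerivAt (fun z : ℂ => A*(1 - z/ε)^2) ((-2*A/ε)*(1 - (t:ℂ)/ε)) (t:ℝ) := by
    have h1 : HasDerivAt (fun z : ℂ => 1 - z/ε) (-(1/ε)) ((t:ℝ):ℂ) := by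
      simpa using ((hasDerivAt_id ((t:ℝ):ℂ)).div_const (ε:ℂ)).const_sub 1
    have h2 := ((h1.fun_pow 2).const_mul A)
    refine h2.congr_deriv ?_
    push_cast; ring
  exact h.comp_ofReal

private lemma tentFTC (ε : ℝ) (hε : 0 < ε) (A : ℂ) (x : ℝ) (hx : 0 ≤ x) :
    ∫ t in (0:ℝ)..x, (if t ≤ ε then (-2*A/ε)*(1 - (t:ℂ)/ε) else 0) =
      (if x ≤ ε then A*(1 - (x:ℂ)/ε)^2 else 0) - A := by
  have hεC : (ε:ℂ) ≠ 0 := by exact_mod_cast hε.ne'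
  have key : ∀ y : ℝ, 0 ≤ y → y ≤ ε →
      (∫ t in (0:ℝ)..y, (if t ≤ ε then (-2*A/ε)*(1 - (t:ℂ)/ε) else 0))
        = A*(1 - (y:ℂ)/ε)^2 - A := by
    intro y hy0 hy
    rw [intervalIntegral.integral_congr (g := fun t : ℝ => (-2*A/ε)*(1 - (t:ℂ)/ε))
      (by intro t ht
          rw [Set.uIcc_of_le hy0] at ht
          simp [if_pos (le_trans ht.2 hy)])]
    rw [intervalIntegral.integral_eq_sub_of_hasDerivAt
      (fun t _ => tentDeriv ε hε A t)
      (by apply Continuous.intervalIntegrable; continuity)]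
    simp
  by_cases hxε : x ≤ ε
  · rw [if_pos hxε]; exact key x hx hxε
  · rw [if_neg hxε]
    push_neg at hxε
    rw [← intervalIntegral.integral_add_adjacent_intervals (b := ε)
      ((tentCont ε hε A).intervalIntegrable 0 ε)
      ((tentCont ε hε A).intervalIntegrable ε x)]
    rw [key ε hε.le le_rfl]
    rw [intervalIntegral.integral_congr (g := fun _ : ℝ => (0:ℂ))
      (by intro t ht
          rw [Set.uIcc_of_le hxε.le] at ht
          by_cases h : t ≤ ε
          · have : t = ε := le_antisymm h ht.1
            subst this
            simp [div_self hεC]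
          · simp [if_neg h])]
    rw [div_self hεC]
    simp

private lemma chiDeriv (a b t : ℝ) :
    HasDerivAt (fun y : ℝ => (y-b)^2*(a-y)^2)
      (2*(t-b)*(a-t)^2 - 2*(t-b)^2*(a-t)) t := by
  have h1 : HasDerivAt (fun y : ℝ => (y-b)^2) (2*(t-b)) t := by
    simpa using ((hasDerivAt_id t).sub_const b).fun_pow 2
  have h2 : HasDerivAt (fun y : ℝ => (a-y)^2) (-(2*(a-t))) t := by
    simpa using ((hasDerivAt_id t).const_sub a).fun_pow 2
  refine (h1.fun_mul h2).congr_deriv ?_; ring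

private lemma chiCont' (a b : ℝ) :
    Continuous fun t : ℝ => (if b ≤ t then 2*(t-b)*(a-t)^2 - 2*(t-b)^2*(a-t) else 0) := by
  apply Continuous.if_le
  · continuity
  · exact continuous_const
  · exact continuous_const
  · exact continuous_id
  · intro t ht; subst ht; ring

private lemma chiCont (a b : ℝ) :
    Continuous fun t : ℝ => (if b ≤ t then (t-b)^2*(a-t)^2 else 0) := by
  apply Continuous.if_le
  · continuity
  · exact continuous_const
  · exact continuous_const
  · exact continuous_id
  · intro t ht; subst ht; ring

private lemma chiFTC (a b : ℝ) (hb : 0 ≤ b) (x : ℝ) (hx : 0 ≤ x) :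
    ∫ t in (0:ℝ)..x, (if b ≤ t then 2*(t-b)*(a-t)^2 - 2*(t-b)^2*(a-t) else 0) =
      (if b ≤ x then (x-b)^2*(a-x)^2 else 0) := by
  by_cases hxb : b ≤ x
  · rw [if_pos hxb]
    have h1 : (∫ t in (0:ℝ)..b, (if b ≤ t then 2*(t-b)*(a-t)^2 - 2*(t-b)^2*(a-t) else 0)) = 0 := by
      rw [intervalIntegral.integral_congr (g := fun _ : ℝ => (0:ℝ))
        (by intro t ht
            rw [Set.uIcc_of_le hb] at ht
            by_cases h : b ≤ t
            · have : t = b := le_antisymm ht.2 h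
              subst this; simp
            · simp [if_neg h])]
      simp
    have h2 : (∫ t in b..x, (if b ≤ t then 2*(t-b)*(a-t)^2 - 2*(t-b)^2*(a-t) else 0)) =
        (x-b)^2*(a-x)^2 := by
      rw [intervalIntegral.integral_congr
        (g := fun t : ℝ => 2*(t-b)*(a-t)^2 - 2*(t-b)^2*(a-t))
        (by intro t ht
            rw [Set.uIcc_of_le hxb] at ht
            simp [if_pos ht.1])]
      rw [intervalIntegral.integral_eq_sub_of_hasDerivAt
        (fun t _ => chiDeriv a b t)
        (by apply Continuous.intervalIntegrable; continuity)]
      simp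
    rw [← intervalIntegral.integral_add_adjacent_intervals (b := b)
      ((chiCont' a b).intervalIntegrable 0 b)
      ((chiCont' a b).intervalIntegrable b x), h1, h2, zero_add]
  · rw [if_neg hxb]
    push_neg at hxb
    rw [intervalIntegral.integral_congr (g := fun _ : ℝ => (0:ℝ))
      (by intro t ht
          rw [Set.uIcc_of_le hx] at ht
          have : ¬ b ≤ t := by linarith [ht.2]
          simp [if_neg this])]
    simp

set_option maxHeartbeats 1000000 in
/-- for s ∈ L²[0,a] and ψ(x) = exp(∫ₓ^a s̄), for every δ > 0 and
A ∈ ℂ there is an absolutely continuous ω on [0,a] with ω(0) = A, ω(a) = 0,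
∫₀^a ω ψ̄ = 0 and ‖ω‖_{L²[0,a]} < δ. -/
theorem small_orthogonal_correction (a : ℝ) (ha : 0 < a) (s : ℝ → ℂ)
    (hs2 : IntegrableOn (fun x => ‖s x‖ ^ 2) (Set.Icc 0 a))
    (hs1 : IntegrableOn s (Set.Icc 0 a))
    (ψ : ℝ → ℂ) (hψ : ∀ x, ψ x = Complex.exp (∫ t in x..a, (starRingEnd ℂ) (s t)))
    (δ : ℝ) (hδ : 0 < δ) (A : ℂ) :
    ∃ ω ω' : ℝ → ℂ,
      IntervalIntegrable ω' volume 0 a ∧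
      (∀ x ∈ Set.Icc (0:ℝ) a, ω x = A + ∫ t in (0:ℝ)..x, ω' t) ∧
      ω 0 = A ∧ ω a = 0 ∧
      (∫ x in (0:ℝ)..a, ω x * (starRingEnd ℂ) (ψ x)) = 0 ∧
      Real.sqrt (∫ x in (0:ℝ)..a, ‖ω x‖ ^ 2) < δ := by
  -- integrability of conj s and continuity of ψ
  have hs1c : IntegrableOn (fun t => (starRingEnd ℂ) (s t)) (Set.Icc 0 a) := by
    refine ⟨continuous_star.comp_aestronglyMeasurable hs1.aestronglyMeasurable, ?_⟩
    exact hs1.2.congr' (Filter.Eventually.of_forall fun x => by simp)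
  have hψc : ContinuousOn ψ (Set.Icc 0 a) := by
    have h0 := intervalIntegral.continuousOn_primitive_interval_left
      (f := fun t => (starRingEnd ℂ) (s t)) (μ := volume) (a := 0) (b := a)
      (by rwa [Set.uIcc_of_le ha.le])
    rw [Set.uIcc_of_le ha.le] at h0
    exact (Complex.continuous_exp.comp_continuousOn h0).congr fun x _ => hψ x
  have hψa : ψ a = 1 := by rw [hψ a]; simp
  -- find η with Re ψ ≥ 1/2 on [a-η, a]
  have hcw : ContinuousWithinAt ψ (Set.Icc 0 a) a := hψc a ⟨ha.le, le_refl a⟩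
  rw [Metric.continuousWithinAt_iff] at hcw
  obtain ⟨η₀, hη₀, hball⟩ := hcw (1/2) (by norm_num)
  set η : ℝ := min (η₀/2) (a/2) with hη_def
  have hη0 : 0 < η := lt_min (by linarith) (by linarith)
  have hηa : η < a := lt_of_le_of_lt (min_le_right _ _) (by linarith)
  set b : ℝ := a - η with hb_def
  have hb0 : 0 < b := by simp only [hb_def]; linarith
  have hba : b < a := by simp only [hb_def]; linarith
  have hRe : ∀ x ∈ Set.Icc b a, 1/2 ≤ (ψ x).re := by
    intro x hx
    have hx0a : x ∈ Set.Icc 0 a := ⟨le_trans hb0.le hx.1, hx.2⟩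
    have hd : dist x a < η₀ := by
      rw [Real.dist_eq, abs_of_nonpos (by linarith [hx.2])]
      have h1 : b ≤ x := hx.1
      have h2 : η ≤ η₀/2 := min_le_left _ _
      simp only [hb_def] at h1
      linarith
    have hb2 := hball hx0a hd
    rw [hψa] at hb2
    have h2 : |(ψ x - 1).re| ≤ dist (ψ x) 1 := by
      rw [Complex.dist_eq]
      exact Complex.abs_re_le_norm _
    simp only [Complex.sub_re, Complex.one_re] at h2
    have h3 := abs_le.1 h2
    linarith [h3.1]
  -- bound M on ψ
  obtain ⟨M, hM⟩ := isCompact_Icc.exists_bound_of_continuousOn hψc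
  have hM0 : 0 ≤ M := le_trans (norm_nonneg (ψ a)) (hM a ⟨ha.le, le_refl a⟩)
  -- the bump χ
  set χ : ℝ → ℝ := fun x => if b ≤ x then (x-b)^2*(a-x)^2 else 0 with hχ_def
  have hχcont : Continuous χ := chiCont a b
  have hχ0 : ∀ x, 0 ≤ χ x := by
    intro x; simp only [hχ_def]
    split
    · positivity
    · exact le_refl 0
  have hχle : ∀ x ∈ Set.Icc (0:ℝ) a, χ x ≤ η^4 := by
    intro x hx; simp only [hχ_def]
    split
    · rename_i h
      have h1 : (x-b)^2 ≤ η^2 := by nlinarith [hx.2]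
      have h2 : (a-x)^2 ≤ η^2 := by nlinarith [hx.2]
      calc (x-b)^2*(a-x)^2 ≤ η^2 * η^2 := by nlinarith [sq_nonneg (x-b)]
        _ = η^4 := by ring
    · positivity
  have hψconj : ContinuousOn (fun x => (starRingEnd ℂ) (ψ x)) (Set.Icc 0 a) :=
    continuous_star.comp_continuousOn hψc
  have hint_χψ : IntervalIntegrable (fun x => (χ x : ℂ) * (starRingEnd ℂ) (ψ x)) volume 0 a := by
    apply ContinuousOn.intervalIntegrable
    rw [Set.uIcc_of_le ha.le]
    exact ((Complex.continuous_ofReal.comp hχcont).continuousOn).mul hψconj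
  set Iχ : ℂ := ∫ x in (0:ℝ)..a, (χ x : ℂ) * (starRingEnd ℂ) (ψ x) with hIχ_def
  have hIχre : Iχ.re = ∫ x in (0:ℝ)..a, χ x * (ψ x).re := by
    have h := ContinuousLinearMap.intervalIntegral_comp_comm Complex.reCLM hint_χψ
    simp only [Complex.reCLM_apply] at h
    rw [hIχ_def, ← h]
    congr 1; funext x
    simp [Complex.mul_re]
  have hR : 0 < Iχ.re := by
    rw [hIχre]
    have hint1 : IntervalIntegrable (fun x => χ x * (ψ x).re) volume 0 a := by
      apply ContinuousOn.intervalIntegrable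
      rw [Set.uIcc_of_le ha.le]
      exact hχcont.continuousOn.mul (Complex.continuous_re.comp_continuousOn hψc)
    have hint2 : IntervalIntegrable (fun x => (1/2) * χ x) volume 0 a :=
      (hχcont.intervalIntegrable 0 a).const_mul _
    have hmono : (∫ x in (0:ℝ)..a, (1/2) * χ x) ≤ ∫ x in (0:ℝ)..a, χ x * (ψ x).re := by
      apply intervalIntegral.integral_mono_on ha.le hint2 hint1
      intro x hx
      by_cases h : b ≤ x
      · have hr := hRe x ⟨h, hx.2⟩
        have hp := hχ0 x
        nlinarith
      · have hz : χ x = 0 := by simp [hχ_def, if_neg h]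
        rw [hz]; simp
    have hpos : 0 < ∫ x in (0:ℝ)..a, (1/2) * χ x := by
      rw [intervalIntegral.integral_const_mul]
      have hsplit : (∫ x in (0:ℝ)..a, χ x) = (∫ x in (0:ℝ)..b, χ x) + ∫ x in b..a, χ x := by
        rw [intervalIntegral.integral_add_adjacent_intervals
          (hχcont.intervalIntegrable 0 b) (hχcont.intervalIntegrable b a)]
      have h1 : (∫ x in (0:ℝ)..b, χ x) = 0 := by
        rw [intervalIntegral.integral_congr (g := fun _ : ℝ => (0:ℝ))
          (by intro t ht
              rw [Set.uIcc_of_le hb0.le] at ht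
              by_cases h : b ≤ t
              · have : t = b := le_antisymm ht.2 h
                simp [hχ_def, this]
              · simp [hχ_def, if_neg h])]
        simp
      have h2 : 0 < ∫ x in b..a, χ x := by
        apply intervalIntegral.intervalIntegral_pos_of_pos_on
          (hχcont.intervalIntegrable b a)
        · intro x hx
          simp only [hχ_def, if_pos hx.1.le]
          have h1' : 0 < x - b := by linarith [hx.1]
          have h2' : 0 < a - x := by linarith [hx.2]
          positivity
        · exact hba
      rw [hsplit, h1, zero_add]
      linarith
    linarith
  have hIχne : Iχ ≠ 0 := by
    intro h; rw [h] at hR; simp at hR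
  set R : ℝ := Iχ.re with hR_def
  -- choose ε
  set K : ℝ := ‖A‖^2 + a * ((‖A‖*M/R)*η^4)^2 with hK_def
  have hK0 : 0 ≤ K := by
    have : 0 ≤ a * ((‖A‖*M/R)*η^4)^2 := by positivity
    simp only [hK_def]; positivity
  set ε : ℝ := min (min b 1) (δ^2/(2*(K+1))) with hε_def
  have hε0 : 0 < ε := by
    apply lt_min (lt_min hb0 one_pos)
    positivity
  have hεb : ε ≤ b := le_trans (min_le_left _ _) (min_le_left _ _)
  have hε1 : ε ≤ 1 := le_trans (min_le_left _ _) (min_le_right _ _)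
  have hεδ : ε ≤ δ^2/(2*(K+1)) := min_le_right _ _
  have hεa : ε ≤ a := le_trans hεb hba.le
  -- the tent T
  set T : ℝ → ℂ := fun x => if x ≤ ε then A*(1 - (x:ℂ)/ε)^2 else 0 with hT_def
  have hTcont : Continuous T := tentCont0 ε hε0 A
  have hTnorm : ∀ x, 0 ≤ x → ‖T x‖ ≤ ‖A‖ := by
    intro x hx
    simp only [hT_def]
    split
    · rename_i h
      have hcast : (1 - (x:ℂ)/ε) = ((1 - x/ε : ℝ) : ℂ) := by push_cast; ring
      rw [norm_mul, hcast, ← Complex.ofReal_pow, Complex.norm_real]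
      have h1 : 0 ≤ 1 - x/ε := by
        rw [sub_nonneg, div_le_one hε0]; exact h
      have h2 : 1 - x/ε ≤ 1 := by
        have : 0 ≤ x/ε := div_nonneg hx hε0.le
        linarith
      rw [Real.norm_eq_abs]
      have h3 : |(1-x/ε)^2| ≤ 1 := by
        rw [abs_of_nonneg (by positivity)]
        nlinarith
      nlinarith [norm_nonneg A]
    · simp [norm_nonneg]
  have hTε : ∀ x, ε ≤ x → T x = 0 := by
    intro x hx
    simp only [hT_def]
    split
    · rename_i h
      have hxε : x = ε := le_antisymm h hx
      rw [hxε, div_self (by exact_mod_cast hε0.ne' : (ε:ℂ) ≠ 0)]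
      simp
    · rfl
  have hint_Tψ1 : IntervalIntegrable (fun x => T x * (starRingEnd ℂ) (ψ x)) volume 0 ε := by
    apply ContinuousOn.intervalIntegrable
    rw [Set.uIcc_of_le hε0.le]
    exact (hTcont.continuousOn).mul (hψconj.mono (Set.Icc_subset_Icc le_rfl hεa))
  have hint_Tψ2 : IntervalIntegrable (fun x => T x * (starRingEnd ℂ) (ψ x)) volume ε a := by
    apply ContinuousOn.intervalIntegrable
    rw [Set.uIcc_of_le hεa]
    exact (hTcont.continuousOn).mul (hψconj.mono (Set.Icc_subset_Icc hε0.le le_rfl))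
  set IT : ℂ := ∫ x in (0:ℝ)..a, T x * (starRingEnd ℂ) (ψ x) with hIT_def
  have hITbound : ‖IT‖ ≤ ε * (‖A‖ * M) := by
    have hsplit : IT = (∫ x in (0:ℝ)..ε, T x * (starRingEnd ℂ) (ψ x))
        + ∫ x in ε..a, T x * (starRingEnd ℂ) (ψ x) := by
      rw [hIT_def, intervalIntegral.integral_add_adjacent_intervals hint_Tψ1 hint_Tψ2]
    have h2 : (∫ x in ε..a, T x * (starRingEnd ℂ) (ψ x)) = 0 := by
      rw [intervalIntegral.integral_congr (g := fun _ : ℝ => (0:ℂ))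
        (by intro t ht
            rw [Set.uIcc_of_le hεa] at ht
            have h0 := hTε t ht.1
            simp [h0])]
      simp
    have h1 : ‖∫ x in (0:ℝ)..ε, T x * (starRingEnd ℂ) (ψ x)‖ ≤ (‖A‖*M) * |ε - 0| := by
      apply intervalIntegral.norm_integral_le_of_norm_le_const
      intro x hx
      rw [Set.uIoc_of_le hε0.le] at hx
      have hx0a : x ∈ Set.Icc 0 a := ⟨hx.1.le, le_trans hx.2 hεa⟩
      rw [norm_mul]
      have hψb : ‖(starRingEnd ℂ) (ψ x)‖ ≤ M := by
        rw [RCLike.norm_conj]; exact hM x hx0a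
      exact mul_le_mul (hTnorm x hx.1.le) hψb (norm_nonneg _) (norm_nonneg A)
    rw [hsplit, h2, add_zero]
    calc ‖∫ x in (0:ℝ)..ε, T x * (starRingEnd ℂ) (ψ x)‖ ≤ (‖A‖*M) * |ε - 0| := h1
      _ = ε * (‖A‖ * M) := by rw [abs_of_nonneg (by linarith)]; ring
  -- the coefficient
  set c : ℂ := -IT / Iχ with hc_def
  have hcnorm : ‖c‖ ≤ ε * (‖A‖ * M) / R := by
    rw [hc_def, norm_div, norm_neg]
    have hIχR : R ≤ ‖Iχ‖ := by
      calc R ≤ |Iχ.re| := le_abs_self _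
        _ ≤ ‖Iχ‖ := Complex.abs_re_le_norm _
    exact div_le_div₀ (by positivity) hITbound hR hIχR
  -- the solution
  refine ⟨fun x => T x + c * (χ x : ℂ),
    fun t => (if t ≤ ε then (-2*A/ε)*(1 - (t:ℂ)/ε) else 0)
      + c * ((if b ≤ t then 2*(t-b)*(a-t)^2 - 2*(t-b)^2*(a-t) else 0 : ℝ) : ℂ),
    ?_, ?_, ?_, ?_, ?_, ?_⟩
  · exact ((tentCont ε hε0 A).add (continuous_const.mul
      (Complex.continuous_ofReal.comp (chiCont' a b)))).intervalIntegrable 0 a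
  · -- FTC
    intro x hx
    have hTint : IntervalIntegrable
        (fun t : ℝ => (if t ≤ ε then (-2*A/ε)*(1 - (t:ℂ)/ε) else 0)) volume 0 x :=
      (tentCont ε hε0 A).intervalIntegrable 0 x
    have hχint : IntervalIntegrable
        (fun t : ℝ => c * ((if b ≤ t then 2*(t-b)*(a-t)^2 - 2*(t-b)^2*(a-t) else 0 : ℝ) : ℂ))
        volume 0 x :=
      (continuous_const.mul (Complex.continuous_ofReal.comp (chiCont' a b))).intervalIntegrable 0 x
    rw [intervalIntegral.integral_add hTint hχint,
      intervalIntegral.integral_const_mul, tentFTC ε hε0 A x hx.1]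
    have hofReal : (∫ t in (0:ℝ)..x,
        ((if b ≤ t then 2*(t-b)*(a-t)^2 - 2*(t-b)^2*(a-t) else 0 : ℝ) : ℂ))
        = Complex.ofReal (∫ t in (0:ℝ)..x, (if b ≤ t then 2*(t-b)*(a-t)^2 - 2*(t-b)^2*(a-t) else 0 : ℝ)) :=
      intervalIntegral.integral_ofReal
    rw [hofReal, chiFTC a b hb0.le x hx.1]
    simp only [hT_def, hχ_def]
    push_cast
    ring
  · -- value at 0
    simp only [hT_def, hχ_def, if_pos hε0.le, if_neg (not_le.2 hb0)]
    simp
  · -- value at a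
    have h1 : ¬ a ≤ ε := not_le.2 (lt_of_le_of_lt hεb hba)
    simp only [hT_def, hχ_def, if_neg h1, if_pos hba.le]
    simp
  · -- orthogonality
    rw [intervalIntegral.integral_congr
      (g := fun x => T x * (starRingEnd ℂ) (ψ x) + c * ((χ x : ℂ) * (starRingEnd ℂ) (ψ x)))
      (fun x _ => by ring)]
    rw [intervalIntegral.integral_add (hint_Tψ1.trans hint_Tψ2) (hint_χψ.const_mul c),
      intervalIntegral.integral_const_mul, ← hIT_def, ← hIχ_def, hc_def,
      div_mul_cancel₀ _ hIχne]
    ring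
  · -- norm bound
    rw [Real.sqrt_lt' hδ]
    have hωcont : Continuous fun x : ℝ => T x + c * (χ x : ℂ) :=
      hTcont.add (continuous_const.mul (Complex.continuous_ofReal.comp hχcont))
    have hnc : Continuous fun x : ℝ => ‖T x + c * (χ x : ℂ)‖^2 := (hωcont.norm).pow 2
    have hsplit : (∫ x in (0:ℝ)..a, ‖T x + c * (χ x : ℂ)‖^2)
        = (∫ x in (0:ℝ)..ε, ‖T x + c * (χ x : ℂ)‖^2)
          + ∫ x in ε..a, ‖T x + c * (χ x : ℂ)‖^2 := by
      rw [intervalIntegral.integral_add_adjacent_intervals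
        (hnc.intervalIntegrable 0 ε) (hnc.intervalIntegrable ε a)]
    have hbound1 : (∫ x in (0:ℝ)..ε, ‖T x + c * (χ x : ℂ)‖^2) ≤ ε * ‖A‖^2 := by
      have h1 : (∫ x in (0:ℝ)..ε, ‖T x + c * (χ x : ℂ)‖^2)
          ≤ ∫ _x in (0:ℝ)..ε, ‖A‖^2 := by
        apply intervalIntegral.integral_mono_on hε0.le (hnc.intervalIntegrable 0 ε)
          (intervalIntegrable_const)
        intro x hx
        have hχx : χ x = 0 := by
          simp only [hχ_def]
          split
          · rename_i h
            have hxb : x = b := le_antisymm (hx.2.trans hεb) h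
            rw [hxb]; simp
          · rfl
        rw [hχx]
        simp only [Complex.ofReal_zero, mul_zero, add_zero]
        have h2 := hTnorm x hx.1
        nlinarith [norm_nonneg (T x)]
      rwa [intervalIntegral.integral_const, smul_eq_mul, sub_zero] at h1
    have hbound2 : (∫ x in ε..a, ‖T x + c * (χ x : ℂ)‖^2)
        ≤ (a - ε) * (‖c‖ * η^4)^2 := by
      have h1 : (∫ x in ε..a, ‖T x + c * (χ x : ℂ)‖^2)
          ≤ ∫ _x in ε..a, (‖c‖ * η^4)^2 := by
        apply intervalIntegral.integral_mono_on hεa (hnc.intervalIntegrable ε a)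
          (intervalIntegrable_const)
        intro x hx
        rw [hTε x hx.1, zero_add]
        have hn : ‖c * (χ x : ℂ)‖ = ‖c‖ * χ x := by
          rw [norm_mul, Complex.norm_real, Real.norm_eq_abs, abs_of_nonneg (hχ0 x)]
        rw [hn]
        apply pow_le_pow_left₀ (by positivity)
        exact mul_le_mul_of_nonneg_left (hχle x ⟨hε0.le.trans hx.1, hx.2⟩) (norm_nonneg c)
      rwa [intervalIntegral.integral_const, smul_eq_mul] at h1
    have e1 : (‖c‖ * η^4)^2 ≤ ε * ((‖A‖*M/R)*η^4)^2 := by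
      have hc2 : ‖c‖^2 ≤ (ε * (‖A‖ * M) / R)^2 :=
        pow_le_pow_left₀ (norm_nonneg c) hcnorm 2
      calc (‖c‖ * η^4)^2 = ‖c‖^2 * η^8 := by ring
        _ ≤ (ε * (‖A‖ * M) / R)^2 * η^8 :=
            mul_le_mul_of_nonneg_right hc2 (by positivity)
        _ = ε^2 * ((‖A‖*M/R)*η^4)^2 := by ring
        _ ≤ ε * ((‖A‖*M/R)*η^4)^2 := by
            apply mul_le_mul_of_nonneg_right ?_ (by positivity)
            nlinarith [hε0.le, hε1]
    have e2 : (a - ε) * (‖c‖ * η^4)^2 ≤ a * (ε * ((‖A‖*M/R)*η^4)^2) :=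
      mul_le_mul (by linarith) e1 (by positivity) ha.le
    have hNK : (∫ x in (0:ℝ)..a, ‖T x + c * (χ x : ℂ)‖^2) ≤ ε * K := by
      have : ε * K = ε * ‖A‖^2 + a * (ε * ((‖A‖*M/R)*η^4)^2) := by
        simp only [hK_def]; ring
      rw [hsplit, this]
      linarith
    have hKδ : ε * K < δ^2 := by
      have h1 : ε * K ≤ (δ^2/(2*(K+1))) * K := mul_le_mul_of_nonneg_right hεδ hK0
      have h2 : (δ^2/(2*(K+1))) * K < δ^2 := by
        rw [div_mul_eq_mul_div, div_lt_iff₀ (by positivity)]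
        nlinarith [pow_pos hδ 2, hK0]
      exact lt_of_le_of_lt h1 h2
    linarith
end
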